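/- Let γ_SD = max of N i.i.d. exponential random variables with mean γ̄_D, and γ_I an independent random variable with density f_{γ_I}(x) = 2(k/γ̄_I)^((L+k)/2) x^((L+k)/2-1) K_{L-k}(2√(kx/γ̄_I))/(Γ(L)Γ(k)). Then the CDF of γ_SDout = γ_SD/(1+γ_I) is F(γ) = 1 - Σ_{n=1}^N C(N,n)(-1)^{n+1} e^{-nγ/γ̄_D} (k γ̄_D/(γ̄_I n γ))^((L+k-1)/2) exp(k γ̄_D/(2 γ̄_I n γ)) W_{(1-L-k)/2,(L-k)/2}(k γ̄_D/(γ̄_I n γ)) for γ > 0. -/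

import Mathlib

open MeasureTheory Set

/-- Modified Bessel function of the second kind, via its integral representation. -/
noncomputable def besselK (ν x : ℝ) : ℝ :=
  ∫ t in Ioi (0:ℝ), Real.exp (-x * Real.cosh t) * Real.cosh (ν * t)

/-- The density of the sum of `L` fully correlated squared-K interferers with shape `k`
and mean parameter `γ̄_I`. -/
noncomputable def fcDensity (L k γbar x : ℝ) : ℝ :=
  2 * (k / γbar) ^ ((L + k) / 2) * x ^ ((L + k) / 2 - 1) / (Real.Gamma L * Real.Gamma k) *
    besselK (L - k) (2 * Real.sqrt (k * x / γbar))

/-- The Whittaker `W` function, via its integral representation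
`W_{λ,μ}(z) = e^{-z/2} z^λ / Γ(μ-λ+1/2) ∫₀^∞ e^{-t} t^{μ-λ-1/2} (1+t/z)^{μ+λ-1/2} dt`. -/
noncomputable def whittakerW (lam mu z : ℝ) : ℝ :=
  Real.exp (-z / 2) * z ^ lam / Real.Gamma (mu - lam + 1/2) *
    ∫ t in Ioi (0:ℝ), Real.exp (-t) * t ^ (mu - lam - 1/2) * (1 + t / z) ^ (mu + lam - 1/2)

lemma integrable_exp_neg_abs : Integrable (fun s : ℝ => Real.exp (-|s|)) := by
  rw [← integrableOn_univ, ← Set.Iic_union_Ioi (a := (0:ℝ))]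
  refine IntegrableOn.union ?_ ?_
  · exact (integrableOn_exp_Iic 0).congr_fun
      (fun s hs => by rw [abs_of_nonpos (mem_Iic.mp hs), neg_neg]) measurableSet_Iic
  · exact (exp_neg_integrableOn_Ioi 0 one_pos).congr_fun
      (fun s hs => by rw [abs_of_pos (mem_Ioi.mp hs)]; norm_num) measurableSet_Ioi

lemma sq_div_eight_le_cosh (s : ℝ) : s ^ 2 / 8 ≤ Real.cosh s := by
  have h1 : Real.exp |s| ≤ 2 * Real.cosh s := by
    rw [← Real.cosh_abs, Real.cosh_eq]
    have := (Real.exp_pos (-|s|)).le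
    linarith
  have h2 : (1 + |s| / 2) ^ 2 ≤ Real.exp |s| := by
    have := Real.add_one_le_exp (|s| / 2)
    have hpos : (0:ℝ) ≤ 1 + |s| / 2 := by positivity
    calc (1 + |s| / 2) ^ 2 ≤ Real.exp (|s| / 2) ^ 2 := by
          apply pow_le_pow_left₀ hpos; linarith
      _ = Real.exp |s| := by rw [← Real.exp_nat_mul]; norm_num [← Real.exp_nat_mul]; ring_nf
  have h3 : s ^ 2 = |s| ^ 2 := (sq_abs s).symm
  nlinarith [abs_nonneg s]

lemma integrable_kernel (ν : ℝ) {x : ℝ} (hx : 0 < x) :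
    Integrable (fun s : ℝ => Real.exp (ν * s - x * Real.cosh s)) := by
  have hC : Integrable (fun s : ℝ => Real.exp (2 * (|ν| + 1) ^ 2 / x) * Real.exp (-|s|)) :=
    integrable_exp_neg_abs.const_mul _
  refine hC.mono' (Continuous.aestronglyMeasurable (by continuity)) ?_
  refine Filter.Eventually.of_forall (fun s => ?_)
  rw [Real.norm_eq_abs, abs_of_pos (Real.exp_pos _), ← Real.exp_add]
  apply Real.exp_le_exp.mpr
  have hcosh := sq_div_eight_le_cosh s
  have h1 : ν * s ≤ |ν| * |s| := by
    calc ν * s ≤ |ν * s| := le_abs_self _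
      _ = |ν| * |s| := abs_mul _ _
  have key : (|ν| + 1) * |s| ≤ 2 * (|ν| + 1) ^ 2 / x + x * (s ^ 2 / 8) := by
    rw [div_add' _ _ _ hx.ne', le_div_iff₀ hx]
    have h8 : 8 * ((|ν| + 1) * |s| * x) ≤ 16 * (|ν| + 1) ^ 2 + x ^ 2 * |s| ^ 2 := by
      nlinarith [sq_nonneg (x * |s| - 4 * (|ν| + 1))]
    have h9 : |s| ^ 2 = s ^ 2 := sq_abs s
    nlinarith
  have h2 : x * (s ^ 2 / 8) ≤ x * Real.cosh s := by
    apply mul_le_mul_of_nonneg_left hcosh hx.le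
  nlinarith [abs_nonneg s]

lemma besselK_rep (ν : ℝ) {x : ℝ} (hx : 0 < x) :
    ∫ s : ℝ, Real.exp (ν * s - x * Real.cosh s) = 2 * besselK ν x := by
  have hint := integrable_kernel ν hx
  have hint' := integrable_kernel (-ν) hx
  rw [← integral_add_compl measurableSet_Ioi hint, compl_Ioi]
  have hIic : ∫ s in Iic (0:ℝ), Real.exp (ν * s - x * Real.cosh s)
      = ∫ s in Ioi (0:ℝ), Real.exp (-ν * s - x * Real.cosh s) := by
    rw [show Iic (0:ℝ) = Iic (-0) by norm_num, ← integral_comp_neg_Ioi]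
    refine setIntegral_congr_fun measurableSet_Ioi (fun s _ => ?_)
    rw [Real.cosh_neg]; ring_nf
  rw [hIic, ← integral_add hint.integrableOn hint'.integrableOn]
  rw [besselK, ← MeasureTheory.integral_const_mul]
  refine setIntegral_congr_fun measurableSet_Ioi (fun s _ => ?_)
  simp only [Real.cosh_eq, Real.exp_sub, neg_mul, Real.exp_neg]
  field_simp

lemma integral_bessel (ν : ℝ) {b : ℝ} (hb : 0 < b) :
    ∫ t in Ioi (0:ℝ), t ^ (ν - 1) * Real.exp (-t - b / t)
      = 2 * Real.sqrt b ^ ν * besselK ν (2 * Real.sqrt b) := by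
  set c := Real.sqrt b with hc_def
  have hc : 0 < c := Real.sqrt_pos.mpr hb
  have hb_eq : b = c * c := (Real.mul_self_sqrt hb.le).symm
  have himg : (fun s : ℝ => c * Real.exp s) '' univ = Ioi 0 := by
    rw [image_univ]
    ext y
    constructor
    · rintro ⟨s, rfl⟩; exact mul_pos hc (Real.exp_pos s)
    · intro hy
      exact ⟨Real.log (y / c), by
        show c * Real.exp (Real.log (y / c)) = y
        rw [Real.exp_log (div_pos hy hc)]; field_simp⟩
  have hderiv : ∀ s ∈ (univ : Set ℝ),
      HasDerivWithinAt (fun s => c * Real.exp s) (c * Real.exp s) univ s :=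
    fun s _ => ((Real.hasDerivAt_exp s).const_mul c).hasDerivWithinAt
  have hinj : InjOn (fun s => c * Real.exp s) univ := by
    intro s₁ _ s₂ _ h
    simpa using mul_left_cancel₀ hc.ne' h
  rw [← himg, integral_image_eq_integral_abs_deriv_smul MeasurableSet.univ hderiv hinj]
  rw [Measure.restrict_univ]
  have hpt : ∀ s : ℝ, |c * Real.exp s| • ((c * Real.exp s) ^ (ν - 1) *
      Real.exp (-(c * Real.exp s) - b / (c * Real.exp s)))
      = c ^ ν * Real.exp (ν * s - 2 * c * Real.cosh s) := by
    intro s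
    have he : (0:ℝ) < Real.exp s := Real.exp_pos s
    have h1 : |c * Real.exp s| = c * Real.exp s := abs_of_pos (mul_pos hc he)
    have h2 : (c * Real.exp s) ^ (ν - 1) = c ^ (ν - 1) * Real.exp (s * (ν - 1)) := by
      rw [Real.mul_rpow hc.le he.le, Real.rpow_def_of_pos he, Real.log_exp]
    have h3 : b / (c * Real.exp s) = c * Real.exp (-s) := by
      rw [hb_eq, Real.exp_neg]; field_simp
    have h4 : -(c * Real.exp s) - b / (c * Real.exp s) = -(2 * c) * Real.cosh s := by
      rw [h3, Real.cosh_eq]; ring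
    rw [smul_eq_mul, h1, h2, h4]
    have h5 : c * c ^ (ν - 1) = c ^ ν := by
      nth_rewrite 1 [← Real.rpow_one c]
      rw [← Real.rpow_add hc]; ring_nf
    have h6 : Real.exp s * Real.exp (s * (ν - 1)) * Real.exp (-(2 * c) * Real.cosh s)
        = Real.exp (ν * s - 2 * c * Real.cosh s) := by
      rw [← Real.exp_add, ← Real.exp_add]; ring_nf
    calc c * Real.exp s * (c ^ (ν - 1) * Real.exp (s * (ν - 1)) *
          Real.exp (-(2 * c) * Real.cosh s))
        = (c * c ^ (ν - 1)) * (Real.exp s * Real.exp (s * (ν - 1)) *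
          Real.exp (-(2 * c) * Real.cosh s)) := by ring
      _ = c ^ ν * Real.exp (ν * s - 2 * c * Real.cosh s) := by rw [h5, h6]
  simp_rw [hpt]
  rw [MeasureTheory.integral_const_mul]
  have h2c : (0:ℝ) < 2 * c := by positivity
  rw [besselK_rep ν h2c]
  ring

lemma fcDensity_eq {L k γI : ℝ} (hI : 0 < γI) (hL : 0 < L) (hk : 0 < k) {x : ℝ} (hx : 0 < x) :
    fcDensity L k γI x = (k / γI) ^ k * x ^ (k - 1) / (Real.Gamma L * Real.Gamma k) *
      ∫ t in Ioi (0:ℝ), t ^ (L - k - 1) * Real.exp (-t - (k / γI) * x / t) := by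
  set a : ℝ := k / γI with ha_def
  have ha : 0 < a := div_pos hk hI
  have hax : 0 < a * x := mul_pos ha hx
  have hb : ∫ t in Ioi (0:ℝ), t ^ (L - k - 1) * Real.exp (-t - a * x / t)
      = 2 * Real.sqrt (a * x) ^ (L - k) * besselK (L - k) (2 * Real.sqrt (a * x)) := by
    have := integral_bessel (L - k) hax
    simpa using this
  rw [hb, fcDensity]
  have hsq : Real.sqrt (a * x) ^ (L - k) = a ^ ((L - k) / 2) * x ^ ((L - k) / 2) := by
    rw [Real.sqrt_eq_rpow, ← Real.rpow_mul hax.le]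
    rw [show (1:ℝ)/2 * (L - k) = (L - k)/2 by ring]
    rw [Real.mul_rpow ha.le hx.le]
  have harg : k * x / γI = a * x := by rw [ha_def]; ring
  rw [harg, hsq]
  have e1 : a ^ ((L + k) / 2) = a ^ k * a ^ ((L - k) / 2) := by
    rw [← Real.rpow_add ha]; ring_nf
  have e2 : x ^ ((L + k) / 2 - 1) = x ^ (k - 1) * x ^ ((L - k) / 2) := by
    rw [← Real.rpow_add hx]; ring_nf
  rw [ha_def] at e1 ⊢
  rw [e1, e2]
  have hne : x ^ ((L - k) / 2) ≠ 0 := (Real.rpow_pos_of_pos hx _).ne'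
  have hane : (k / γI) ^ ((L - k) / 2) ≠ 0 := (Real.rpow_pos_of_pos ha _).ne'
  field_simp

lemma integrable_gamma_kernel {k r : ℝ} (hk : 0 < k) (hr : 0 < r) :
    IntegrableOn (fun x : ℝ => x ^ (k - 1) * Real.exp (-(r * x))) (Ioi 0) := by
  have := integrableOn_rpow_mul_exp_neg_mul_rpow (p := 1) (s := k - 1) (b := r)
    (by linarith) one_pos hr
  refine this.congr_fun (fun x _ => ?_) measurableSet_Ioi
  simp only [Real.rpow_one, neg_mul]

lemma laplace_fc {γI L k : ℝ} (hI : 0 < γI) (hL : 0 < L) (hk : 0 < k) {s : ℝ} (hs : 0 ≤ s) :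
    IntegrableOn (fun x => Real.exp (-(s * x)) * fcDensity L k γI x) (Ioi 0) ∧
    ∫ x in Ioi (0:ℝ), Real.exp (-(s * x)) * fcDensity L k γI x
      = (k / γI) ^ k / Real.Gamma L *
        ∫ t in Ioi (0:ℝ), t ^ (L - 1) * Real.exp (-t) * (s * t + k / γI) ^ (-k) := by
  set a : ℝ := k / γI with ha_def
  have ha : 0 < a := div_pos hk hI
  set G : ℝ → ℝ → ℝ := fun t x =>
    (t ^ (L - k - 1) * Real.exp (-t)) * (x ^ (k - 1) * Real.exp (-((s + a / t) * x))) with hG_def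
  -- positivity of the rate
  have hr : ∀ t ∈ Ioi (0:ℝ), 0 < s + a / t := fun t ht =>
    add_pos_of_nonneg_of_pos hs (div_pos ha ht)
  -- measurability
  have hGmeas : AEStronglyMeasurable (Function.uncurry G)
      ((volume.restrict (Ioi 0)).prod (volume.restrict (Ioi 0))) := by
    apply Measurable.aestronglyMeasurable; fun_prop
  -- integrability in x for fixed t
  have hGx : ∀ t ∈ Ioi (0:ℝ), Integrable (G t) (volume.restrict (Ioi 0)) := by
    intro t ht
    exact (integrable_gamma_kernel hk (hr t ht)).const_mul _
  -- value of the inner x-integral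
  have hGxval : ∀ t ∈ Ioi (0:ℝ), ∫ x in Ioi (0:ℝ), G t x
      = Real.Gamma k * (t ^ (L - 1) * Real.exp (-t) * (s * t + a) ^ (-k)) := by
    intro t ht
    have ht' : (0:ℝ) < t := ht
    rw [hG_def]
    simp only []
    rw [MeasureTheory.integral_const_mul]
    rw [show (∫ x in Ioi (0:ℝ), x ^ (k - 1) * Real.exp (-((s + a / t) * x)))
        = (1 / (s + a / t)) ^ k * Real.Gamma k from
      Real.integral_rpow_mul_exp_neg_mul_Ioi hk (hr t ht)]
    have h1 : (1 / (s + a / t)) = t / (s * t + a) := by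
      rw [show s + a / t = (s * t + a) / t by field_simp, one_div_div]
    have h2 : (t / (s * t + a)) ^ k = t ^ k * (s * t + a) ^ (-k) := by
      rw [Real.div_rpow ht'.le (by positivity), Real.rpow_neg (by positivity), div_eq_mul_inv]
    have h3 : t ^ (L - k - 1) * t ^ k = t ^ (L - 1) := by
      rw [← Real.rpow_add ht']; ring_nf
    rw [h1, h2]
    calc t ^ (L - k - 1) * Real.exp (-t) * (t ^ k * (s * t + a) ^ (-k) * Real.Gamma k)
        = Real.Gamma k * ((t ^ (L - k - 1) * t ^ k) * Real.exp (-t) * (s * t + a) ^ (-k)) := by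
          ring
      _ = _ := by rw [h3]
  -- integrability of the t-marginal of norms
  have hHint : Integrable
      (fun t => Real.Gamma k * (t ^ (L - 1) * Real.exp (-t) * (s * t + a) ^ (-k)))
      (volume.restrict (Ioi 0)) := by
    have hg : IntegrableOn (fun t : ℝ => Real.Gamma k * (s * 0 + a) ^ (-k) *
        (Real.exp (-t) * t ^ (L - 1))) (Ioi 0) :=
      (Real.GammaIntegral_convergent hL).const_mul _
    refine hg.mono' ?_ ?_
    · apply Measurable.aestronglyMeasurable; fun_prop
    · rw [ae_restrict_iff' measurableSet_Ioi]
      refine Filter.Eventually.of_forall (fun t ht => ?_)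
      have ht' : (0:ℝ) < t := ht
      have hb1 : (s * t + a) ^ (-k) ≤ a ^ (-k) := by
        rw [Real.rpow_neg (by positivity), Real.rpow_neg ha.le]
        refine inv_anti₀ (Real.rpow_pos_of_pos ha _) ?_
        exact Real.rpow_le_rpow ha.le (by nlinarith) hk.le
      have hnn : (0:ℝ) ≤ t ^ (L - 1) * Real.exp (-t) * (s * t + a) ^ (-k) := by positivity
      rw [Real.norm_eq_abs, abs_of_nonneg (by positivity)]
      have hΓ : 0 < Real.Gamma k := Real.Gamma_pos_of_pos hk
      have : t ^ (L - 1) * Real.exp (-t) * (s * t + a) ^ (-k)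
          ≤ t ^ (L - 1) * Real.exp (-t) * a ^ (-k) := by
        apply mul_le_mul_of_nonneg_left hb1 (by positivity)
      calc Real.Gamma k * (t ^ (L - 1) * Real.exp (-t) * (s * t + a) ^ (-k))
          ≤ Real.Gamma k * (t ^ (L - 1) * Real.exp (-t) * a ^ (-k)) := by
            exact mul_le_mul_of_nonneg_left this hΓ.le
        _ = Real.Gamma k * (s * 0 + a) ^ (-k) * (Real.exp (-t) * t ^ (L - 1)) := by
            rw [show s * 0 + a = a by ring]; ring
  -- the product integrability
  have hGprod : Integrable (Function.uncurry G)
      ((volume.restrict (Ioi 0)).prod (volume.restrict (Ioi 0))) := by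
    rw [integrable_prod_iff hGmeas]
    constructor
    · rw [ae_restrict_iff' measurableSet_Ioi]
      exact Filter.Eventually.of_forall hGx
    · refine hHint.congr ?_
      refine (ae_restrict_iff' measurableSet_Ioi).mpr (Filter.Eventually.of_forall
        (fun t ht => ?_))
      simp only [Function.uncurry_apply_pair]
      rw [← hGxval t ht]
      refine integral_congr_ae ((ae_restrict_iff' measurableSet_Ioi).mpr
        (Filter.Eventually.of_forall (fun x hx => ?_)))
      have ht' : (0:ℝ) < t := ht
      have hx' : (0:ℝ) < x := hx
      show G t x = ‖G t x‖
      rw [Real.norm_eq_abs, abs_of_nonneg (by rw [hG_def]; positivity)]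
  -- pointwise identity between the integrand and the t-marginal of G
  have hPpt : ∀ x ∈ Ioi (0:ℝ), Real.exp (-(s * x)) * fcDensity L k γI x
      = a ^ k / (Real.Gamma L * Real.Gamma k) * ∫ t in Ioi (0:ℝ), G t x := by
    intro x hx
    have hx' : (0:ℝ) < x := hx
    have hmarg : ∫ t in Ioi (0:ℝ), G t x
        = (x ^ (k - 1) * Real.exp (-(s * x))) *
          ∫ t in Ioi (0:ℝ), t ^ (L - k - 1) * Real.exp (-t - a * x / t) := by
      rw [← MeasureTheory.integral_const_mul]
      refine setIntegral_congr_fun measurableSet_Ioi (fun t ht => ?_)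
      have ht' : (0:ℝ) < t := ht
      rw [hG_def]
      simp only []
      rw [show -((s + a / t) * x) = -(s * x) + (-(a * x / t)) by field_simp; ring,
        Real.exp_add, show -t - a * x / t = -t + (-(a * x / t)) by ring, Real.exp_add]
      ring
    rw [fcDensity_eq hI hL hk hx', hmarg]
    ring
  have hPae : (fun x => Real.exp (-(s * x)) * fcDensity L k γI x)
      =ᵐ[volume.restrict (Ioi 0)]
      (fun x => a ^ k / (Real.Gamma L * Real.Gamma k) * ∫ t in Ioi (0:ℝ), G t x) := by
    exact (ae_restrict_iff' measurableSet_Ioi).mpr (Filter.Eventually.of_forall hPpt)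
  have hmargInt : Integrable (fun x => ∫ t in Ioi (0:ℝ), G t x) (volume.restrict (Ioi 0)) :=
    hGprod.integral_prod_right
  constructor
  · exact (hmargInt.const_mul _).congr hPae.symm
  · rw [integral_congr_ae hPae, MeasureTheory.integral_const_mul]
    have hswap : ∫ x in Ioi (0:ℝ), ∫ t in Ioi (0:ℝ), G t x
        = ∫ t in Ioi (0:ℝ), ∫ x in Ioi (0:ℝ), G t x := by
      exact (integral_integral_swap hGprod).symm
    rw [hswap]
    have : ∫ t in Ioi (0:ℝ), (∫ x in Ioi (0:ℝ), G t x)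
        = Real.Gamma k * ∫ t in Ioi (0:ℝ), t ^ (L - 1) * Real.exp (-t) * (s * t + a) ^ (-k) := by
      rw [← MeasureTheory.integral_const_mul]
      exact integral_congr_ae ((ae_restrict_iff' measurableSet_Ioi).mpr
        (Filter.Eventually.of_forall hGxval))
    rw [this]
    have hΓk : Real.Gamma k ≠ 0 := (Real.Gamma_pos_of_pos hk).ne'
    have hΓL : Real.Gamma L ≠ 0 := (Real.Gamma_pos_of_pos hL).ne'
    field_simp
    ring_nf
    simp only [mul_comm _ s]

-- the value of the Laplace transform integral (abstract form)
lemma whittaker_match {a s L k : ℝ} (ha : 0 < a) (hL : 0 < L) (hk : 0 < k) (hs : 0 < s) :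
    a ^ k / Real.Gamma L *
        ∫ t in Ioi (0:ℝ), t ^ (L - 1) * Real.exp (-t) * (s * t + a) ^ (-k)
      = (a / s) ^ ((L + k - 1) / 2) * Real.exp (a / s / 2) *
        whittakerW ((1 - L - k) / 2) ((L - k) / 2) (a / s) := by
  set z : ℝ := a / s with hz_def
  have hz : 0 < z := div_pos ha hs
  have hW : whittakerW ((1 - L - k) / 2) ((L - k) / 2) z
      = Real.exp (-z / 2) * z ^ ((1 - L - k) / 2) / Real.Gamma L *
        ∫ t in Ioi (0:ℝ), Real.exp (-t) * t ^ (L - 1) * (1 + t / z) ^ (-k) := by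
    rw [whittakerW]
    rw [show (L - k) / 2 - (1 - L - k) / 2 + 1/2 = L by ring,
      show (L - k) / 2 - (1 - L - k) / 2 - 1/2 = L - 1 by ring,
      show (L - k) / 2 + (1 - L - k) / 2 - 1/2 = -k by ring]
  rw [hW]
  have hint_eq : ∫ t in Ioi (0:ℝ), Real.exp (-t) * t ^ (L - 1) * (1 + t / z) ^ (-k)
      = a ^ k * ∫ t in Ioi (0:ℝ), t ^ (L - 1) * Real.exp (-t) * (s * t + a) ^ (-k) := by
    rw [← MeasureTheory.integral_const_mul]
    refine setIntegral_congr_fun measurableSet_Ioi (fun t ht => ?_)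
    have ht' : (0:ℝ) < t := ht
    have h1 : 1 + t / z = (s * t + a) / a := by
      rw [hz_def]; field_simp; ring
    have h2 : ((s * t + a) / a) ^ (-k) = (s * t + a) ^ (-k) * a ^ k := by
      rw [Real.div_rpow (by positivity) ha.le, div_eq_mul_inv, ← Real.rpow_neg ha.le, neg_neg]
    rw [h1, h2]
    ring
  rw [hint_eq]
  have hzsum : z ^ ((L + k - 1) / 2) * z ^ ((1 - L - k) / 2) = 1 := by
    rw [← Real.rpow_add hz, show (L + k - 1) / 2 + (1 - L - k) / 2 = 0 by ring, Real.rpow_zero]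
  have hexp : Real.exp (z / 2) * Real.exp (-z / 2) = 1 := by
    rw [← Real.exp_add, show z / 2 + -z / 2 = 0 by ring, Real.exp_zero]
  have hz2 : z ^ ((L + k - 1) / 2) * Real.exp (z / 2) *
      (Real.exp (-z / 2) * z ^ ((1 - L - k) / 2) / Real.Gamma L *
        (a ^ k * ∫ t in Ioi (0:ℝ), t ^ (L - 1) * Real.exp (-t) * (s * t + a) ^ (-k)))
      = (z ^ ((L + k - 1) / 2) * z ^ ((1 - L - k) / 2)) * (Real.exp (z / 2) * Real.exp (-z / 2))
        * (a ^ k / Real.Gamma L *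
          ∫ t in Ioi (0:ℝ), t ^ (L - 1) * Real.exp (-t) * (s * t + a) ^ (-k)) := by
    ring
  rw [hz2, hzsum, hexp]
  ring

lemma value_zero {γI L k : ℝ} (hI : 0 < γI) (hL : 0 < L) (hk : 0 < k) :
    (k / γI) ^ k / Real.Gamma L *
      ∫ t in Ioi (0:ℝ), t ^ (L - 1) * Real.exp (-t) * ((0:ℝ) * t + k / γI) ^ (-k) = 1 := by
  set a : ℝ := k / γI with ha_def
  have ha : 0 < a := div_pos hk hI
  have h1 : ∫ t in Ioi (0:ℝ), t ^ (L - 1) * Real.exp (-t) * ((0:ℝ) * t + a) ^ (-k)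
      = a ^ (-k) * ∫ t in Ioi (0:ℝ), t ^ (L - 1) * Real.exp (-(1 * t)) := by
    rw [← MeasureTheory.integral_const_mul]
    refine setIntegral_congr_fun measurableSet_Ioi (fun t ht => ?_)
    rw [zero_mul, zero_add, one_mul]
    ring
  rw [h1, Real.integral_rpow_mul_exp_neg_mul_Ioi hL one_pos]
  have hΓL : Real.Gamma L ≠ 0 := (Real.Gamma_pos_of_pos hL).ne'
  have hak : a ^ k * a ^ (-k) = 1 := by
    rw [← Real.rpow_add ha, add_neg_cancel, Real.rpow_zero]
  rw [show (1:ℝ)/1 = 1 by norm_num, Real.one_rpow, one_mul]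
  have : a ^ k / Real.Gamma L * (a ^ (-k) * Real.Gamma L)
      = a ^ k * a ^ (-k) * (Real.Gamma L / Real.Gamma L) := by ring
  rw [this, hak, div_self hΓL, one_mul]


/-- CDF of the SINR-output of SNR-based selection diversity with `N` i.i.d. exponential
(Rayleigh-fading) branches and fully-correlated interference:
`F(γ) = ∫₀^∞ (1-e^{-(1+x)γ/γ̄_D})^N f_{γ_I}(x) dx` equals the closed Whittaker form. -/
theorem sd_snr_based_sinr_cdf (N : ℕ) (hN : 1 ≤ N)
    (γbarD γbarI L k : ℝ) (hD : 0 < γbarD) (hI : 0 < γbarI) (hL : 0 < L) (hk : 0 < k) :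
    ∀ γ : ℝ, 0 < γ →
      ∫ x in Ioi (0:ℝ),
          (1 - Real.exp (-(1 + x) * γ / γbarD)) ^ N * fcDensity L k γbarI x =
        1 - ∑ n ∈ Finset.Icc 1 N,
          (N.choose n : ℝ) * (-1 : ℝ) ^ (n + 1) * Real.exp (-(n : ℝ) * γ / γbarD) *
            (k * γbarD / (γbarI * n * γ)) ^ ((L + k - 1) / 2) *
            Real.exp (k * γbarD / (2 * γbarI * n * γ)) *
            whittakerW ((1 - L - k) / 2) ((L - k) / 2) (k * γbarD / (γbarI * n * γ)) := by
  intro γ hγ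
  set a : ℝ := k / γbarI with ha_def
  have ha : 0 < a := div_pos hk hI
  set sn : ℕ → ℝ := fun n => (n : ℝ) * γ / γbarD with hsn_def
  have hsn_nonneg : ∀ n : ℕ, 0 ≤ sn n := fun n => by positivity
  set c : ℕ → ℝ := fun n => (N.choose n : ℝ) * (-1 : ℝ) ^ n * Real.exp (-(sn n)) with hc_def
  -- pointwise binomial expansion
  have hexpand : ∀ x ∈ Ioi (0:ℝ),
      (1 - Real.exp (-(1 + x) * γ / γbarD)) ^ N * fcDensity L k γbarI x
      = ∑ n ∈ Finset.range (N + 1),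
          c n * (Real.exp (-(sn n * x)) * fcDensity L k γbarI x) := by
    intro x _
    have hbin : (1 - Real.exp (-(1 + x) * γ / γbarD)) ^ N
        = ∑ n ∈ Finset.range (N + 1),
          (-1 : ℝ) ^ n * Real.exp (-(1 + x) * γ / γbarD) ^ n * (N.choose n : ℝ) := by
      rw [show (1 : ℝ) - Real.exp (-(1 + x) * γ / γbarD)
        = (- Real.exp (-(1 + x) * γ / γbarD)) + 1 by ring, add_pow]
      refine Finset.sum_congr rfl (fun n _ => ?_)
      rw [one_pow, neg_pow]
      ring
    rw [hbin, Finset.sum_mul]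
    refine Finset.sum_congr rfl (fun n _ => ?_)
    have hpow : Real.exp (-(1 + x) * γ / γbarD) ^ n
        = Real.exp (-(sn n)) * Real.exp (-(sn n * x)) := by
      rw [← Real.exp_nat_mul, ← Real.exp_add]
      congr 1
      rw [hsn_def]
      field_simp
      ring
    rw [hpow, hc_def]
    ring
  rw [setIntegral_congr_fun measurableSet_Ioi hexpand]
  have hint : ∀ n ∈ Finset.range (N + 1), IntegrableOn
      (fun x => c n * (Real.exp (-(sn n * x)) * fcDensity L k γbarI x)) (Ioi 0) :=
    fun n _ => ((laplace_fc hI hL hk (hsn_nonneg n)).1).const_mul _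
  rw [MeasureTheory.integral_finset_sum _ hint]
  have hterm : ∀ n ∈ Finset.range (N + 1),
      ∫ x in Ioi (0:ℝ), c n * (Real.exp (-(sn n * x)) * fcDensity L k γbarI x)
      = c n * ((k / γbarI) ^ k / Real.Gamma L *
          ∫ t in Ioi (0:ℝ), t ^ (L - 1) * Real.exp (-t) * (sn n * t + k / γbarI) ^ (-k)) := by
    intro n _
    rw [MeasureTheory.integral_const_mul, (laplace_fc hI hL hk (hsn_nonneg n)).2]
  rw [Finset.sum_congr rfl hterm]
  have hsplit : Finset.range (N + 1) = insert 0 (Finset.Icc 1 N) := by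
    ext m; simp only [Finset.mem_range, Finset.mem_insert, Finset.mem_Icc]; omega
  rw [hsplit, Finset.sum_insert (by simp)]
  have hzero : c 0 * ((k / γbarI) ^ k / Real.Gamma L *
      ∫ t in Ioi (0:ℝ), t ^ (L - 1) * Real.exp (-t) * (sn 0 * t + k / γbarI) ^ (-k)) = 1 := by
    have h0 : sn 0 = 0 := by rw [hsn_def]; simp
    have hc0 : c 0 = 1 := by rw [hc_def]; simp [h0]
    rw [hc0, h0, one_mul, value_zero hI hL hk]
  rw [hzero]
  have hfinal : ∀ n ∈ Finset.Icc 1 N,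
      c n * ((k / γbarI) ^ k / Real.Gamma L *
        ∫ t in Ioi (0:ℝ), t ^ (L - 1) * Real.exp (-t) * (sn n * t + k / γbarI) ^ (-k))
      = -((N.choose n : ℝ) * (-1 : ℝ) ^ (n + 1) * Real.exp (-(n : ℝ) * γ / γbarD) *
          (k * γbarD / (γbarI * n * γ)) ^ ((L + k - 1) / 2) *
          Real.exp (k * γbarD / (2 * γbarI * n * γ)) *
          whittakerW ((1 - L - k) / 2) ((L - k) / 2) (k * γbarD / (γbarI * n * γ))) := by
    intro n hn
    have hn1 : 1 ≤ n := (Finset.mem_Icc.mp hn).1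
    have hnpos : (0:ℝ) < (n : ℝ) := by exact_mod_cast Nat.pos_of_ne_zero (by omega)
    have hsn_pos : 0 < sn n := by rw [hsn_def]; positivity
    have hz_eq : a / sn n = k * γbarD / (γbarI * n * γ) := by
      rw [ha_def, hsn_def]
      field_simp
    have hz2_eq : k * γbarD / (γbarI * n * γ) / 2 = k * γbarD / (2 * γbarI * n * γ) := by
      ring
    have := whittaker_match ha hL hk hsn_pos (L := L) (k := k)
    rw [ha_def] at this
    rw [this]
    rw [← ha_def, hz_eq, hz2_eq]
    have hexp_eq : Real.exp (-(sn n)) = Real.exp (-(n : ℝ) * γ / γbarD) := by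
      congr 1; rw [hsn_def]; ring
    rw [hc_def]
    simp only []
    rw [hexp_eq]
    have hsign : (-1 : ℝ) ^ n = -(-1 : ℝ) ^ (n + 1) := by
      rw [pow_succ]; ring
    rw [hsign]
    ring
  rw [Finset.sum_congr rfl hfinal, Finset.sum_neg_distrib]
  ring
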